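/- arXiv:2403.00387 — 2 statements merged into one kernel-verified Lean document; each statement's English description precedes it below -/
import Mathlib

section
/- For every c > 0 there exist constants Δ > 0, k > 0, and μ > 0 such that every solution X of the time-delay system (S_c) whose initial segment satisfies ‖X0‖ ≤ Δ obeys |X(t)| ≤ k ‖X0‖ e^{−μ t} for all t ≥ 0. That is, the origin of (S_c) is locally exponentially stable. -/
open Set Matrix

/-- The matrix `A0`. -/
noncomputable def A0 : Matrix (Fin 2) (Fin 2) ℝ := !![-0.1, 0.5; -2, 0]

/-- The matrix `A1`. -/
noncomputable def A1 : Matrix (Fin 2) (Fin 2) ℝ := !![0, 2; -0.5, -0.1]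

/-- The saturation function `φ`. -/
noncomputable def phi (s : ℝ) : ℝ := if s < 0 then 0 else if s ≤ 1 then s else 1

/-- `ℝ²` with the Euclidean norm. -/
abbrev E2 : Type := EuclideanSpace ℝ (Fin 2)

/-- Action of a `2 × 2` matrix on `ℝ²`. -/
noncomputable def act (A : Matrix (Fin 2) (Fin 2) ℝ) (x : E2) : E2 :=
  Matrix.toEuclideanLin A x

/-- The nonlinearity `g(x,u) = (1+|x|²)(φ(u) A1 + (1-φ(u)) A0) x`. -/
noncomputable def gfun (x : E2) (u : ℝ) : E2 :=
  (1 + ‖x‖ ^ 2) • act (phi u • A1 + (1 - phi u) • A0) x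

/-- `X = (x, z1, z2) : [-2,∞) → ℝ² × ℝ × ℝ` is a solution of the time-delay system `(S_c)`. -/
def IsSolution (c : ℝ) (x : ℝ → E2) (z1 z2 : ℝ → ℝ) : Prop :=
  ContinuousOn x (Ici (-2 : ℝ)) ∧ ContinuousOn z1 (Ici (-2 : ℝ)) ∧
  ContinuousOn z2 (Ici (-2 : ℝ)) ∧
  ∀ t : ℝ, 0 < t →
    HasDerivAt x ((c * phi (z2 (t - 2))) • gfun (x t) (z1 (t - 1))
      + (c * (1 - phi (z2 (t - 2)))) • act A0 (x t)) t
    ∧ HasDerivAt z1 (-(z1 t)) t ∧ HasDerivAt z2 (-(z2 t)) t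

/-- Euclidean norm `|X(t)|` of the full state `(x(t), z1(t), z2(t)) ∈ ℝ⁴`. -/
noncomputable def Xnorm (x : ℝ → E2) (z1 z2 : ℝ → ℝ) (t : ℝ) : ℝ :=
  Real.sqrt (‖x t‖ ^ 2 + (z1 t) ^ 2 + (z2 t) ^ 2)

/-- Norm `‖X0‖ = sup_{τ ∈ [-2,0]} |X(τ)|` of the initial segment of a solution. -/
noncomputable def initNorm (x : ℝ → E2) (z1 z2 : ℝ → ℝ) : ℝ :=
  sSup (Xnorm x z1 z2 '' Icc (-2 : ℝ) 0)


lemma phi_nonneg' (s : ℝ) : 0 ≤ phi s := by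
  unfold phi; split_ifs <;> linarith

lemma phi_le_one' (s : ℝ) : phi s ≤ 1 := by
  unfold phi; split_ifs <;> linarith

lemma phi_le_abs' (s : ℝ) : phi s ≤ |s| := by
  unfold phi; split_ifs with h1 h2
  · positivity
  · exact le_abs_self s
  · push_neg at h1 h2; rw [abs_of_nonneg h1]; linarith

lemma normsq' (y : E2) : ‖y‖^2 = y 0 ^2 + y 1 ^2 := by
  rw [EuclideanSpace.norm_eq, Real.sq_sqrt (by positivity)]
  simp [Fin.sum_univ_two]

lemma coord0' (a b w : ℝ) (y : E2) :
    (a • gfun y w + b • act A0 y) 0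
      = a*(1+‖y‖^2)*((phi w*0 + (1-phi w)*(-(1/10)))*(y 0) + (phi w*2 + (1-phi w)*(1/2))*(y 1))
        + b*(-(1/10)*(y 0) + (1/2)*(y 1)) := by
  simp [gfun, act, Matrix.toEuclideanLin_apply, Matrix.mulVec, dotProduct, Matrix.vecHead, Matrix.vecTail,
    Fin.sum_univ_two, A0, A1, Matrix.smul_apply, Matrix.add_apply, smul_eq_mul]
  ring

lemma coord1' (a b w : ℝ) (y : E2) :
    (a • gfun y w + b • act A0 y) 1
      = a*(1+‖y‖^2)*((phi w*(-(1/2)) + (1-phi w)*(-2))*(y 0) + (phi w*(-(1/10)) + (1-phi w)*0)*(y 1))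
        + b*(-2*(y 0) + 0*(y 1)) := by
  simp [gfun, act, Matrix.toEuclideanLin_apply, Matrix.mulVec, dotProduct, Matrix.vecHead, Matrix.vecTail,
    Fin.sum_univ_two, A0, A1, Matrix.smul_apply, Matrix.add_apply, smul_eq_mul]
  ring

/-- Solutions of `ż = -z` on `(0,∞)` that are continuous at `0`. -/
lemma expSol' {z : ℝ → ℝ} (hc : ContinuousOn z (Ici (-2:ℝ)))
    (hd : ∀ t > (0:ℝ), HasDerivAt z (-(z t)) t) :
    ∀ t ≥ (0:ℝ), z t = z 0 * Real.exp (-t) := by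
  intro t ht
  rcases eq_or_lt_of_le ht with h0 | ht
  · simp [← h0]
  have key : ∀ ε ∈ Ioo (0:ℝ) t, z t * Real.exp t = z ε * Real.exp ε := by
    intro ε hε
    have hcont : ContinuousOn (fun s => z s * Real.exp s) (Icc ε t) := by
      apply ContinuousOn.mul
      · exact hc.mono (fun s hs => le_trans (by norm_num) (le_trans hε.1.le hs.1))
      · exact Real.continuous_exp.continuousOn
    have := constant_of_has_deriv_right_zero hcont (fun s hs => by
      have hds : HasDerivAt (fun s => z s * Real.exp s) 0 s := by
        have := (hd s (lt_of_lt_of_le hε.1 hs.1)).mul (Real.hasDerivAt_exp s)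
        exact this.congr_deriv (by ring)
      exact hds.hasDerivWithinAt)
    exact this t (right_mem_Icc.2 hε.2.le)
  have h1 : Filter.Tendsto (fun ε => z ε * Real.exp ε) (nhdsWithin 0 (Ioi (0:ℝ)))
      (nhds (z 0 * Real.exp 0)) := by
    apply Filter.Tendsto.mul
    · exact ((hc 0 (by norm_num)).mono (fun s (hs : s ∈ Ioi (0:ℝ)) =>
        le_trans (by norm_num : (-2:ℝ) ≤ 0) (le_of_lt hs)))
    · exact (Real.continuous_exp.tendsto 0).mono_left nhdsWithin_le_nhds
  have heq : (fun ε => z ε * Real.exp ε) =ᶠ[nhdsWithin 0 (Ioi (0:ℝ))]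
      (fun _ => z t * Real.exp t) := by
    filter_upwards [Ioo_mem_nhdsGT_of_mem (⟨le_refl 0, ht⟩ : (0:ℝ) ∈ Ico 0 t)] with ε hε
    exact (key ε hε).symm
  have huniq := tendsto_nhds_unique (h1.congr' heq) tendsto_const_nhds
  have hexp : Real.exp t ≠ 0 := (Real.exp_pos t).ne'
  rw [Real.exp_neg]
  rw [Real.exp_zero, mul_one] at huniq
  field_simp
  linarith [huniq]

/-- Lyapunov-type decay with an invariance bootstrap. -/
lemma decay' {V dV : ℝ → ℝ} {a R : ℝ} (ha : 0 < a)
    (hVc : ContinuousOn V (Ici (0:ℝ)))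
    (hd : ∀ t > (0:ℝ), HasDerivAt V (dV t) t)
    (hpos : ∀ t ≥ (0:ℝ), 0 ≤ V t)
    (h0 : V 0 < R)
    (hbd : ∀ t > (0:ℝ), V t ≤ R → dV t ≤ -a * V t) :
    ∀ t ≥ (0:ℝ), V t ≤ V 0 * Real.exp (-a * t) := by
  set W : ℝ → ℝ := fun s => V s * Real.exp (a * s) with hW
  have hWc : ContinuousOn W (Ici (0:ℝ)) :=
    hVc.mul (Real.continuous_exp.comp (continuous_const.mul continuous_id)).continuousOn
  have hWd : ∀ s > (0:ℝ), HasDerivAt W ((dV s + a * V s) * Real.exp (a * s)) s := by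
    intro s hs
    have h1 : HasDerivAt (fun s => Real.exp (a * s)) (a * Real.exp (a * s)) s := by
      have := (Real.hasDerivAt_exp (a * s)).comp s ((hasDerivAt_id s).const_mul a)
      simpa [mul_comm, Function.comp_def] using this
    have := (hd s hs).mul h1
    exact this.congr_deriv (by ring)
  have key : ∀ t ≥ (0:ℝ), W t ≤ W 0 → V t ≤ V 0 * Real.exp (-a * t) := by
    intro t ht hWt
    have h1 : V t * Real.exp (a * t) ≤ V 0 * Real.exp (a * 0) := hWt
    rw [mul_zero, Real.exp_zero, mul_one] at h1
    rw [neg_mul, Real.exp_neg]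
    rw [← le_div_iff₀ (Real.exp_pos _)] at h1
    calc V t ≤ V 0 / Real.exp (a*t) := h1
      _ = V 0 * (Real.exp (a*t))⁻¹ := by ring
  have main : ∀ t ≥ (0:ℝ), W t ≤ W 0 := by
    by_contra hcon
    push_neg at hcon
    obtain ⟨t0, ht0, hWt0⟩ := hcon
    set Bad : Set ℝ := {t | 0 ≤ t ∧ W 0 < W t} with hBad
    have hBadne : Bad.Nonempty := ⟨t0, ht0, hWt0⟩
    have hBadbdd : BddBelow Bad := ⟨0, fun t htt => htt.1⟩
    set u := sInf Bad with hu
    have hu0 : 0 ≤ u := le_csInf hBadne (fun t htt => htt.1)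
    have hlt : ∀ s, 0 ≤ s → s < u → W s ≤ W 0 := by
      intro s hs hsu
      by_contra hWs
      push_neg at hWs
      exact absurd (csInf_le hBadbdd ⟨hs, hWs⟩) (not_le.2 hsu)
    have hWu : W u ≤ W 0 := by
      rcases eq_or_lt_of_le hu0 with h | h
      · rw [← h]
      · have hucl : u ∈ closure (Ico (0:ℝ) u) := by
          rw [closure_Ico (ne_of_lt h)]
          exact ⟨hu0, le_refl u⟩
        have hne : (nhdsWithin u (Ico (0:ℝ) u)).NeBot :=
          mem_closure_iff_nhdsWithin_neBot.1 hucl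
        have hcw : Filter.Tendsto W (nhdsWithin u (Ico (0:ℝ) u)) (nhds (W u)) :=
          (hWc u hu0).mono (fun s hs => hs.1)
        refine le_of_tendsto hcw ?_
        filter_upwards [self_mem_nhdsWithin] with s hs
        exact hlt s hs.1 hs.2
    have hVltR : ∀ s ∈ Icc (0:ℝ) u, V s < R := by
      intro s hs
      have hWs : W s ≤ W 0 := by
        rcases eq_or_lt_of_le hs.2 with h | h
        · rw [h]; exact hWu
        · exact hlt s hs.1 h
      have := key s hs.1 hWs
      calc V s ≤ V 0 * Real.exp (-a * s) := this
        _ ≤ V 0 * 1 := by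
            apply mul_le_mul_of_nonneg_left _ (hpos 0 (le_refl 0))
            exact Real.exp_le_one_iff.2 (by nlinarith [hs.1])
        _ = V 0 := mul_one _
        _ < R := h0
    have hVu : V u < R := hVltR u ⟨hu0, le_refl u⟩
    have hev : ∀ᶠ s in nhdsWithin u (Ici (0:ℝ)), V s < R :=
      (hVc u hu0).eventually (Filter.Tendsto.eventually_lt_const hVu Filter.tendsto_id) |>.mono
        (fun s hs => hs)
    obtain ⟨ε, hε, hball⟩ := Metric.mem_nhdsWithin_iff.1 hev
    set δ := ε / 2 with hδ
    have hδ0 : 0 < δ := by positivity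
    have hwin : ∀ s ∈ Icc u (u + δ), V s < R := by
      intro s hs
      apply hball
      constructor
      · rw [Metric.mem_ball, Real.dist_eq, abs_lt]
        constructor
        · linarith [hs.1]
        · linarith [hs.2]
      · exact le_trans hu0 hs.1
    have hanti : AntitoneOn W (Icc u (u + δ)) := by
      apply antitoneOn_of_deriv_nonpos (convex_Icc u (u+δ))
      · exact hWc.mono (fun s hs => le_trans hu0 hs.1)
      · intro s hs
        rw [interior_Icc] at hs
        exact ((hWd s (lt_of_le_of_lt hu0 hs.1)).differentiableAt).differentiableWithinAt
      · intro s hs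
        rw [interior_Icc] at hs
        have hs0 : 0 < s := lt_of_le_of_lt hu0 hs.1
        have hVs : V s ≤ R := (hwin s ⟨hs.1.le, hs.2.le⟩).le
        have := hbd s hs0 hVs
        rw [HasDerivAt.deriv (hWd s hs0)]
        have hVs0 : 0 ≤ V s := hpos s hs0.le
        nlinarith [Real.exp_pos (a * s)]
    have hnobad : ∀ t ∈ Bad, u + δ < t := by
      intro t htt
      by_contra hle
      push_neg at hle
      have ht0' : 0 ≤ t := htt.1
      have : W t ≤ W 0 := by
        rcases lt_or_ge t u with h | h
        · exact hlt t ht0' h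
        · calc W t ≤ W u := hanti ⟨le_refl u, by linarith⟩ ⟨h, hle⟩ h
            _ ≤ W 0 := hWu
      exact absurd htt.2 (not_lt.2 this)
    have : u + δ ≤ u := le_csInf hBadne (fun t htt => (hnobad t htt).le)
    linarith
  intro t ht
  exact key t ht (main t ht)

lemma algcore' {c φ1 φ2 W G2 : ℝ} (hc : 0 < c) (h1a : 0 ≤ φ1) (h1b : φ1 ≤ 1/1000)
    (h2a : 0 ≤ φ2) (h2b : φ2 ≤ 1) (hW0 : 0 ≤ W) (hw : W ≤ 1) (hG2le : G2 ≤ 50*W) :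
    -c*W - c*φ2*W^2 + c*(φ2*((1+W)*(φ1*G2))) ≤ -(c/2)*W := by
  have h3 : φ1*G2 ≤ (1/20)*W := by
    nlinarith [mul_nonneg h1a (sub_nonneg.2 hG2le),
      mul_nonneg (by linarith : (0:ℝ) ≤ 1/20 - 50*φ1) hW0]
  have h4 : (1+W)*(φ1*G2) ≤ (1/10)*W := by
    rcases le_or_gt (φ1*G2) 0 with h | h
    · nlinarith
    · nlinarith
  have h5 : φ2*((1+W)*(φ1*G2)) ≤ (1/10)*W := by
    rcases le_or_gt ((1+W)*(φ1*G2)) 0 with h | h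
    · nlinarith
    · nlinarith
  have h6 : 0 ≤ c*φ2*W^2 := by positivity
  nlinarith [mul_le_mul_of_nonneg_left h5 hc.le]

lemma alg' {c u v φ1 φ2 u' v' : ℝ} (hc : 0 < c) (h1a : 0 ≤ φ1) (h1b : φ1 ≤ 1/1000)
    (h2a : 0 ≤ φ2) (h2b : φ2 ≤ 1) (hw : u^2 + v^2 ≤ 1)
    (hu' : u' = c*φ2*(1+(u^2+v^2))*((φ1*0 + (1-φ1)*(-(1/10)))*u + (φ1*2 + (1-φ1)*(1/2))*v)
        + c*(1-φ2)*(-(1/10)*u + (1/2)*v))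
    (hv' : v' = c*φ2*(1+(u^2+v^2))*((φ1*(-(1/2)) + (1-φ1)*(-2))*u + (φ1*(-(1/10)) + (1-φ1)*0)*v)
        + c*(1-φ2)*(-2*u + 0*v)) :
    50*u*u' - 2*(u'*v + u*v') + (63/5)*v*v' ≤ -(c/2)*(u^2+v^2) := by
  have hW0 : (0:ℝ) ≤ u^2+v^2 := by positivity
  have hG2le : 2*(u^2 + (939/20)*u*v - (213/100)*v^2) ≤ 50*(u^2+v^2) := by
    nlinarith [sq_nonneg (u-v), sq_nonneg u, sq_nonneg v]
  have hid : 50*u*u' - 2*(u'*v + u*v') + (63/5)*v*v'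
      = -c*(u^2+v^2) - c*φ2*(u^2+v^2)^2
        + c*(φ2*((1+(u^2+v^2))*(φ1*(2*(u^2 + (939/20)*u*v - (213/100)*v^2))))) := by
    rw [hu', hv']; ring
  rw [hid]
  exact algcore' hc h1a h1b h2a h2b hW0 hw hG2le

set_option maxHeartbeats 1000000 in
/-- Local exponential stability of the origin of `(S_c)`: for every `c > 0` there are
`Δ, k, μ > 0` such that every solution with `‖X0‖ ≤ Δ` satisfies
`|X(t)| ≤ k ‖X0‖ e^{-μ t}` for all `t ≥ 0`. -/
theorem stmt_3 (c : ℝ) (hc : 0 < c) :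
    ∃ Δ k μ : ℝ, 0 < Δ ∧ 0 < k ∧ 0 < μ ∧
      ∀ (x : ℝ → E2) (z1 z2 : ℝ → ℝ), IsSolution c x z1 z2 →
        initNorm x z1 z2 ≤ Δ →
        ∀ t : ℝ, 0 ≤ t →
          Xnorm x z1 z2 t ≤ k * initNorm x z1 z2 * Real.exp (-μ * t) := by
  have haux : (0:ℝ) < min (c/52) 2 := lt_min (by positivity) (by norm_num)
  refine ⟨1/1000, 3, min (c/52) 2 / 2, by norm_num, by norm_num, by linarith, ?_⟩
  intro x z1 z2 hsol hN t ht
  obtain ⟨hx, hz1, hz2, hode⟩ := hsol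
  set N := initNorm x z1 z2 with hNdef
  set a : ℝ := min (c/52) 2 with hadef
  have ha : 0 < a := haux
  have ha2 : a ≤ 2 := min_le_right _ _
  have hac : a ≤ c/52 := min_le_left _ _
  -- initial segment bounds
  have hXcont : ContinuousOn (Xnorm x z1 z2) (Icc (-2:ℝ) 0) := by
    apply Real.continuous_sqrt.comp_continuousOn
    exact (((hx.mono Icc_subset_Ici_self).norm.pow 2).add
      ((hz1.mono Icc_subset_Ici_self).pow 2)).add ((hz2.mono Icc_subset_Ici_self).pow 2)
  have hbdd : BddAbove (Xnorm x z1 z2 '' Icc (-2:ℝ) 0) :=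
    (isCompact_Icc.image_of_continuousOn hXcont).bddAbove
  have hXle : ∀ τ ∈ Icc (-2:ℝ) 0, Xnorm x z1 z2 τ ≤ N :=
    fun τ hτ => le_csSup hbdd (mem_image_of_mem _ hτ)
  have hN0 : 0 ≤ N := le_trans (Real.sqrt_nonneg _) (hXle 0 ⟨by norm_num, le_refl 0⟩)
  have hz1le : ∀ τ ∈ Icc (-2:ℝ) 0, |z1 τ| ≤ N := by
    intro τ hτ
    refine le_trans ?_ (hXle τ hτ)
    calc |z1 τ| = Real.sqrt ((z1 τ)^2) := (Real.sqrt_sq_eq_abs _).symm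
      _ ≤ Xnorm x z1 z2 τ :=
          Real.sqrt_le_sqrt (by nlinarith [sq_nonneg ‖x τ‖, sq_nonneg (z2 τ)])
  have hz2le : ∀ τ ∈ Icc (-2:ℝ) 0, |z2 τ| ≤ N := by
    intro τ hτ
    refine le_trans ?_ (hXle τ hτ)
    calc |z2 τ| = Real.sqrt ((z2 τ)^2) := (Real.sqrt_sq_eq_abs _).symm
      _ ≤ Xnorm x z1 z2 τ :=
          Real.sqrt_le_sqrt (by nlinarith [sq_nonneg ‖x τ‖, sq_nonneg (z1 τ)])
  have hx0le : ‖x 0‖ ≤ N := by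
    refine le_trans ?_ (hXle 0 ⟨by norm_num, le_refl 0⟩)
    calc ‖x 0‖ = Real.sqrt (‖x 0‖^2) := (Real.sqrt_sq (norm_nonneg _)).symm
      _ ≤ Xnorm x z1 z2 0 :=
          Real.sqrt_le_sqrt (by nlinarith [sq_nonneg (z1 0), sq_nonneg (z2 0)])
  -- z solutions
  have hz1sol : ∀ s ≥ (0:ℝ), z1 s = z1 0 * Real.exp (-s) :=
    expSol' hz1 (fun s hs => (hode s hs).2.1)
  have hz2sol : ∀ s ≥ (0:ℝ), z2 s = z2 0 * Real.exp (-s) :=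
    expSol' hz2 (fun s hs => (hode s hs).2.2)
  -- phi bound on z1 input
  have hφ1 : ∀ s > (0:ℝ), phi (z1 (s-1)) ≤ 1/1000 := by
    intro s hs
    refine le_trans (phi_le_abs' _) (le_trans ?_ hN)
    rcases le_or_gt 1 s with h | h
    · rw [hz1sol (s-1) (by linarith)]
      rw [abs_mul, abs_of_pos (Real.exp_pos _)]
      calc |z1 0| * Real.exp (-(s-1)) ≤ |z1 0| * 1 := by
            apply mul_le_mul_of_nonneg_left _ (abs_nonneg _)
            exact Real.exp_le_one_iff.2 (by linarith)
        _ = |z1 0| := mul_one _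
        _ ≤ N := hz1le 0 ⟨by norm_num, le_refl 0⟩
    · exact hz1le (s-1) ⟨by linarith, by linarith⟩
  -- the Lyapunov function
  set F : ℝ → E2 := fun s => (c * phi (z2 (s - 2))) • gfun (x s) (z1 (s - 1))
      + (c * (1 - phi (z2 (s - 2)))) • act A0 (x s) with hF
  set V : ℝ → ℝ := fun s => 25 * (x s 0)^2 - 2 * (x s 0 * x s 1) + 63/10 * (x s 1)^2 with hV
  set dV : ℝ → ℝ := fun s => 50*(x s 0)*(F s 0) - 2*((F s 0)*(x s 1) + (x s 0)*(F s 1))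
      + (63/5)*((x s 1)*(F s 1)) with hdV
  have hxc0 : ContinuousOn x (Ici (0:ℝ)) := hx.mono (fun s hs => le_trans (by norm_num : (-2:ℝ) ≤ 0) hs)
  have hc0 : ContinuousOn (fun s => x s 0) (Ici (0:ℝ)) :=
    (EuclideanSpace.proj (0:Fin 2) : E2 →L[ℝ] ℝ).continuous.comp_continuousOn hxc0
  have hc1 : ContinuousOn (fun s => x s 1) (Ici (0:ℝ)) :=
    (EuclideanSpace.proj (1:Fin 2) : E2 →L[ℝ] ℝ).continuous.comp_continuousOn hxc0
  have hVc : ContinuousOn V (Ici (0:ℝ)) := by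
    rw [hV]
    exact ((continuousOn_const.mul (hc0.pow 2)).sub
      (continuousOn_const.mul (hc0.mul hc1))).add (continuousOn_const.mul (hc1.pow 2))
  have hVd : ∀ s > (0:ℝ), HasDerivAt V (dV s) s := by
    intro s hs
    have hdx : HasDerivAt x (F s) s := (hode s hs).1
    have hu : HasDerivAt (fun τ => x τ 0) (F s 0) s :=
      (EuclideanSpace.proj (0:Fin 2) : E2 →L[ℝ] ℝ).hasFDerivAt.comp_hasDerivAt s hdx
    have hv : HasDerivAt (fun τ => x τ 1) (F s 1) s :=
      (EuclideanSpace.proj (1:Fin 2) : E2 →L[ℝ] ℝ).hasFDerivAt.comp_hasDerivAt s hdx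
    have hcomb := (((hu.pow 2).const_mul (25:ℝ)).sub
      ((hu.mul hv).const_mul (2:ℝ))).add ((hv.pow 2).const_mul ((63:ℝ)/10))
    have hval : dV s = 25 * (↑2 * x s 0 ^ (2-1) * F s 0) - 2 * (F s 0 * x s 1 + x s 0 * F s 1)
        + 63/10 * (↑2 * x s 1 ^ (2-1) * F s 1) := by
      rw [hdV]; push_cast; ring
    rw [hV, hval]
    exact hcomb
  have hpos : ∀ s ≥ (0:ℝ), 0 ≤ V s := by
    intro s _
    rw [hV]
    nlinarith [sq_nonneg (5*(x s 0) - (x s 1)/5), sq_nonneg (x s 1)]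
  have h0 : V 0 < 6 := by
    have h2 : V 0 ≤ 26 * ‖x 0‖^2 := by
      rw [hV, normsq' (x 0)]
      nlinarith [sq_nonneg (x 0 0 + x 0 1)]
    have h3 : ‖x 0‖^2 ≤ N^2 := by nlinarith [norm_nonneg (x 0)]
    nlinarith [hN, hN0]
  have hbd : ∀ s > (0:ℝ), V s ≤ 6 → dV s ≤ -a * V s := by
    intro s hs hVs
    rw [hV] at hVs
    have hW1 : (x s 0)^2 + (x s 1)^2 ≤ 1 := by
      nlinarith [sq_nonneg (4*(x s 0) - x s 1), sq_nonneg (x s 0), sq_nonneg (x s 1)]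
    have hu'eq : F s 0 = c * phi (z2 (s-2)) * (1+((x s 0)^2+(x s 1)^2))
          * ((phi (z1 (s-1))*0 + (1-phi (z1 (s-1)))*(-(1/10)))*(x s 0)
            + (phi (z1 (s-1))*2 + (1-phi (z1 (s-1)))*(1/2))*(x s 1))
        + c*(1-phi (z2 (s-2)))*(-(1/10)*(x s 0) + (1/2)*(x s 1)) := by
      show ((c * phi (z2 (s-2))) • gfun (x s) (z1 (s-1))
        + (c * (1 - phi (z2 (s-2)))) • act A0 (x s)) 0 = _
      rw [coord0', normsq' (x s)]
    have hv'eq : F s 1 = c * phi (z2 (s-2)) * (1+((x s 0)^2+(x s 1)^2))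
          * ((phi (z1 (s-1))*(-(1/2)) + (1-phi (z1 (s-1)))*(-2))*(x s 0)
            + (phi (z1 (s-1))*(-(1/10)) + (1-phi (z1 (s-1)))*0)*(x s 1))
        + c*(1-phi (z2 (s-2)))*(-2*(x s 0) + 0*(x s 1)) := by
      show ((c * phi (z2 (s-2))) • gfun (x s) (z1 (s-1))
        + (c * (1 - phi (z2 (s-2)))) • act A0 (x s)) 1 = _
      rw [coord1', normsq' (x s)]
    have key := alg' hc (phi_nonneg' (z1 (s-1))) (hφ1 s hs) (phi_nonneg' (z2 (s-2)))
      (phi_le_one' (z2 (s-2))) hW1 hu'eq hv'eq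
    have hdVeq : dV s = 50*(x s 0)*(F s 0) - 2*((F s 0)*(x s 1) + (x s 0)*(F s 1))
        + (63/5)*((x s 1)*(F s 1)) := by rw [hdV]
    have h26 : V s ≤ 26*((x s 0)^2+(x s 1)^2) := by
      rw [hV]; nlinarith [sq_nonneg (x s 0 + x s 1)]
    have hV0' : 0 ≤ V s := hpos s hs.le
    have e1 : a * V s ≤ (c/52) * V s := mul_le_mul_of_nonneg_right hac hV0'
    have e2 : (c/52) * V s ≤ (c/52) * (26*((x s 0)^2+(x s 1)^2)) :=
      mul_le_mul_of_nonneg_left h26 (by positivity)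
    rw [hdVeq]
    linarith [key, e1, e2]
  have hdecay := decay' ha hVc hVd hpos h0 hbd
  -- final assembly
  have hVt := hdecay t ht
  have hV0le : V 0 ≤ 26 * N^2 := by
    have h2 : V 0 ≤ 26 * ‖x 0‖^2 := by
      rw [hV, normsq' (x 0)]
      nlinarith [sq_nonneg (x 0 0 + x 0 1)]
    nlinarith [norm_nonneg (x 0)]
  have hE : (0:ℝ) < Real.exp (-a*t) := Real.exp_pos _
  have hVtle : V t ≤ 26 * N^2 * Real.exp (-a*t) := by
    calc V t ≤ V 0 * Real.exp (-a*t) := hVt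
      _ ≤ 26*N^2 * Real.exp (-a*t) := mul_le_mul_of_nonneg_right hV0le hE.le
  have hxt : 6 * ‖x t‖^2 ≤ V t := by
    rw [hV, normsq' (x t)]
    nlinarith [sq_nonneg (4*(x t 0) - x t 1)]
  have hz1t : (z1 t)^2 ≤ N^2 * Real.exp (-a*t) := by
    rw [hz1sol t ht]
    have habs : (z1 0)^2 ≤ N^2 := by
      have := hz1le 0 ⟨by norm_num, le_refl 0⟩
      nlinarith [abs_nonneg (z1 0), sq_abs (z1 0)]
    have hexp2 : Real.exp (-t)^2 = Real.exp (-(2*t)) := by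
      rw [sq, ← Real.exp_add]; congr 1; ring
    have hexple : Real.exp (-(2*t)) ≤ Real.exp (-a*t) := by
      apply Real.exp_le_exp.2
      nlinarith [mul_nonneg (sub_nonneg.2 ha2) ht]
    calc (z1 0 * Real.exp (-t))^2 = (z1 0)^2 * Real.exp (-t)^2 := by ring
      _ ≤ N^2 * Real.exp (-t)^2 := by nlinarith [sq_nonneg (Real.exp (-t))]
      _ = N^2 * Real.exp (-(2*t)) := by rw [hexp2]
      _ ≤ N^2 * Real.exp (-a*t) := mul_le_mul_of_nonneg_left hexple (by positivity)
  have hz2t : (z2 t)^2 ≤ N^2 * Real.exp (-a*t) := by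
    rw [hz2sol t ht]
    have habs : (z2 0)^2 ≤ N^2 := by
      have := hz2le 0 ⟨by norm_num, le_refl 0⟩
      nlinarith [abs_nonneg (z2 0), sq_abs (z2 0)]
    have hexp2 : Real.exp (-t)^2 = Real.exp (-(2*t)) := by
      rw [sq, ← Real.exp_add]; congr 1; ring
    have hexple : Real.exp (-(2*t)) ≤ Real.exp (-a*t) := by
      apply Real.exp_le_exp.2
      nlinarith [mul_nonneg (sub_nonneg.2 ha2) ht]
    calc (z2 0 * Real.exp (-t))^2 = (z2 0)^2 * Real.exp (-t)^2 := by ring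
      _ ≤ N^2 * Real.exp (-t)^2 := by nlinarith [sq_nonneg (Real.exp (-t))]
      _ = N^2 * Real.exp (-(2*t)) := by rw [hexp2]
      _ ≤ N^2 * Real.exp (-a*t) := mul_le_mul_of_nonneg_left hexple (by positivity)
  have hsq : Real.exp (-(a/2)*t)^2 = Real.exp (-a*t) := by
    rw [sq, ← Real.exp_add]; congr 1; ring
  have hbound : ‖x t‖^2 + (z1 t)^2 + (z2 t)^2 ≤ (3 * N * Real.exp (-(a/2)*t))^2 := by
    have expand : (3 * N * Real.exp (-(a/2)*t))^2 = 9 * (N^2 * Real.exp (-a*t)) := by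
      rw [mul_pow, mul_pow, hsq]; ring
    have hNE : (0:ℝ) ≤ N^2 * Real.exp (-a*t) := by positivity
    rw [expand]
    linarith [hVtle, hxt, hz1t, hz2t]
  have hgoal : Xnorm x z1 z2 t ≤ 3 * N * Real.exp (-(a/2)*t) := by
    calc Xnorm x z1 z2 t ≤ Real.sqrt ((3 * N * Real.exp (-(a/2)*t))^2) :=
          Real.sqrt_le_sqrt hbound
      _ = 3 * N * Real.exp (-(a/2)*t) := Real.sqrt_sq (by positivity)
  calc Xnorm x z1 z2 t ≤ 3 * N * Real.exp (-(a/2)*t) := hgoal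
    _ = 3 * N * Real.exp (-(a/2) * t) := rfl
end

section
/- There exist λ̄ ∈ (0,1) and constants K > 0, γ > 0 such that for every c > 0, all continuous functions μ1 : [0,∞) → [0, λ̄] and μ2 : [0,∞) → [0,1], and every differentiable function x : [0,∞) → ℝ² satisfying ẋ(t) = c μ2(t) (1+|x(t)|²) A_{μ1(t)} x(t) + c (1−μ2(t)) A0 x(t) for all t ≥ 0, one has |x(t)| ≤ K |x(0)| e^{−c γ t} for all t ≥ 0. -/
open Set Matrix

/-- Convex combination `A_λ = λ A1 + (1-λ) A0`. -/
noncomputable def Amat (l : ℝ) : Matrix (Fin 2) (Fin 2) ℝ := l • A1 + (1 - l) • A0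


lemma act_apply' (A : Matrix (Fin 2) (Fin 2) ℝ) (w : E2) (i : Fin 2) :
    act A w i = A i 0 * w 0 + A i 1 * w 1 := by
  simp [act, Matrix.toEuclideanLin_apply, Matrix.mulVec, dotProduct, Fin.sum_univ_two]
  fin_cases i <;> simp

lemma norm_sq_E2 (w : E2) : ‖w‖ ^ 2 = (w 0)^2 + (w 1)^2 := by
  rw [EuclideanSpace.norm_eq, Real.sq_sqrt (by positivity)]
  simp [Fin.sum_univ_two, sq_abs]

lemma amat_apply0 (l : ℝ) (w : E2) :
    act (Amat l) w 0 = l*(2*w 1) + (1-l)*(-(1/10)*w 0 + (1/2)*w 1) := by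
  rw [act_apply']; simp [Amat, A0, A1]; ring

lemma amat_apply1 (l : ℝ) (w : E2) :
    act (Amat l) w 1 = l*(-(1/2)*w 0 - (1/10)*w 1) + (1-l)*(-2*w 0) := by
  rw [act_apply']; simp [Amat, A0, A1]; ring

lemma a0_apply0 (w : E2) : act A0 w 0 = -(1/10)*w 0 + (1/2)*w 1 := by
  rw [act_apply']; norm_num [A0]

lemma a0_apply1 (w : E2) : act A0 w 1 = -2*w 0 := by
  rw [act_apply']; norm_num [A0]

set_option maxHeartbeats 1000000 in
lemma expand_lemma (c m l U W : ℝ) :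
    25*((c*m*(1+(U^2+W^2))*(l*(2*W)+(1-l)*(-(1/10)*U+(1/2)*W)) + c*(1-m)*(-(1/10)*U+(1/2)*W))*U
      + U*(c*m*(1+(U^2+W^2))*(l*(2*W)+(1-l)*(-(1/10)*U+(1/2)*W)) + c*(1-m)*(-(1/10)*U+(1/2)*W)))
    - 2*((c*m*(1+(U^2+W^2))*(l*(2*W)+(1-l)*(-(1/10)*U+(1/2)*W)) + c*(1-m)*(-(1/10)*U+(1/2)*W))*W
      + U*(c*m*(1+(U^2+W^2))*(l*(-(1/2)*U-(1/10)*W)+(1-l)*(-2*U)) + c*(1-m)*(-2*U)))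
    + (63/10)*((c*m*(1+(U^2+W^2))*(l*(-(1/2)*U-(1/10)*W)+(1-l)*(-2*U)) + c*(1-m)*(-2*U))*W
      + W*(c*m*(1+(U^2+W^2))*(l*(-(1/2)*U-(1/10)*W)+(1-l)*(-2*U)) + c*(1-m)*(-2*U)))
    = c*m*(1+(U^2+W^2))*(-(U^2+W^2) + l*(2*U^2+(939/10)*U*W-(426/100)*W^2))
      + c*(1-m)*(-(U^2+W^2)) := by
  ring

set_option maxHeartbeats 1000000 in
lemma key_ineq (c m l U W : ℝ) (hc : 0 < c) (hl0 : 0 ≤ l) (hl1 : l ≤ 1/100)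
    (hm0 : 0 ≤ m) (hm1 : m ≤ 1) :
    c*m*(1+(U^2+W^2))*(-(U^2+W^2) + l*(2*U^2+(939/10)*U*W-(426/100)*W^2))
      + c*(1-m)*(-(U^2+W^2))
    ≤ -(c/52) * (25*(U*U) - 2*(U*W) + (63/10)*(W*W)) := by
  have hM : l*(2*U^2 + (939/10)*U*W - (426/100)*W^2) ≤ (1/2)*(U^2+W^2) := by
    nlinarith [mul_nonneg hl0 (sq_nonneg (U-W)), mul_nonneg hl0 (sq_nonneg (U+W)),
      mul_nonneg hl0 (sq_nonneg W), mul_nonneg hl0 (sq_nonneg U),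
      mul_nonneg (sub_nonneg.2 hl1) (sq_nonneg (U+W)),
      mul_nonneg (sub_nonneg.2 hl1) (sq_nonneg (U-W)),
      sq_nonneg (U-W), sq_nonneg (U+W)]
  have hcm : 0 ≤ c * m * (1 + (U^2+W^2)) := by positivity
  have step1 : c*m*(1+(U^2+W^2))*(-(U^2+W^2) + l*(2*U^2+(939/10)*U*W-(426/100)*W^2))
      ≤ c*m*(1+(U^2+W^2))*(-(1/2)*(U^2+W^2)) := by
    apply mul_le_mul_of_nonneg_left _ hcm; linarith
  have h1 : ∀ s : ℝ, 0 ≤ s →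
      c*m*(1+s)*(-(1/2)*s) + c*(1-m)*(-(s)) ≤ -(c/2)*s := by
    intro s hs
    nlinarith [mul_nonneg (mul_nonneg hc.le hs) (sub_nonneg.2 hm1),
      mul_nonneg (mul_nonneg (mul_nonneg hc.le hm0) hs) hs]
  have h1' := h1 (U^2+W^2) (by positivity)
  have h2 : -(c/2)*(U^2+W^2) ≤ -(c/52) * (25*(U*U) - 2*(U*W) + (63/10)*(W*W)) := by
    nlinarith [mul_nonneg hc.le (sq_nonneg (U+W)), mul_nonneg hc.le (sq_nonneg W)]
  linarith

set_option maxHeartbeats 1600000 in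

/-- There are `λ̄ ∈ (0,1)`, `K > 0`, `γ > 0` such that for all `c > 0`, all continuous
`μ1 : [0,∞) → [0,λ̄]`, `μ2 : [0,∞) → [0,1]`, every solution of
`ẋ = c μ2 (1+|x|²) A_{μ1} x + c (1-μ2) A0 x` satisfies `|x(t)| ≤ K |x(0)| e^{-cγt}`. -/
theorem stmt_4 :
    ∃ lbar K γ : ℝ, lbar ∈ Ioo (0 : ℝ) 1 ∧ 0 < K ∧ 0 < γ ∧
      ∀ c : ℝ, 0 < c →
      ∀ μ1 μ2 : ℝ → ℝ,
        ContinuousOn μ1 (Ici 0) → (∀ t : ℝ, 0 ≤ t → μ1 t ∈ Icc (0 : ℝ) lbar) →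
        ContinuousOn μ2 (Ici 0) → (∀ t : ℝ, 0 ≤ t → μ2 t ∈ Icc (0 : ℝ) 1) →
        ∀ x : ℝ → E2,
          (∀ t : ℝ, 0 ≤ t →
            HasDerivWithinAt x ((c * μ2 t * (1 + ‖x t‖ ^ 2)) • act (Amat (μ1 t)) (x t)
              + (c * (1 - μ2 t)) • act A0 (x t)) (Ici 0) t) →
          ∀ t : ℝ, 0 ≤ t → ‖x t‖ ≤ K * ‖x 0‖ * Real.exp (-(c * γ) * t) := by
  refine ⟨1/100, 3, 1/104, ⟨by norm_num, by norm_num⟩, by norm_num, by norm_num, ?_⟩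
  intro c hc μ1 μ2 _ hμ1 _ hμ2 x hx
  set u : ℝ → ℝ := fun s => x s 0 with hu_def
  set v : ℝ → ℝ := fun s => x s 1 with hv_def
  set V : ℝ → ℝ := fun s => 25*(u s*u s) - 2*(u s*v s) + (63/10)*(v s*v s) with hV_def
  have hder : ∀ t : ℝ, 0 ≤ t → ∃ D : ℝ, HasDerivWithinAt V D (Ici 0) t ∧ D ≤ -(c/52) * V t := by
    intro t ht
    have hx' := hx t ht
    set d : E2 := (c * μ2 t * (1 + ‖x t‖ ^ 2)) • act (Amat (μ1 t)) (x t)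
      + (c * (1 - μ2 t)) • act A0 (x t) with hd_def
    have hu0 := (EuclideanSpace.proj (0 : Fin 2)).hasFDerivAt.comp_hasDerivWithinAt t hx'
    have hv0 := (EuclideanSpace.proj (1 : Fin 2)).hasFDerivAt.comp_hasDerivWithinAt t hx'
    have hu : HasDerivWithinAt u (d 0) (Ici 0) t := hu0
    have hv : HasDerivWithinAt v (d 1) (Ici 0) t := hv0
    have hVd : HasDerivWithinAt V
        (25*(d 0*u t + u t*d 0) - 2*(d 0*v t + u t*d 1) + (63/10)*(d 1*v t + v t*d 1))
        (Ici 0) t :=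
      (((hu.mul hu).const_mul 25).sub ((hu.mul hv).const_mul 2)).add
        ((hv.mul hv).const_mul (63/10))
    refine ⟨_, hVd, ?_⟩
    have hnorm : ‖x t‖ ^ 2 = x t 0 ^ 2 + x t 1 ^ 2 := norm_sq_E2 (x t)
    have hd0 : d 0 = c * μ2 t * (1 + (u t^2 + v t^2)) *
        (μ1 t*(2*v t) + (1-μ1 t)*(-(1/10)*u t + (1/2)*v t))
        + c * (1 - μ2 t) * (-(1/10)*u t + (1/2)*v t) := by
      simp only [hd_def, PiLp.add_apply, PiLp.smul_apply, smul_eq_mul, amat_apply0, a0_apply0,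
        hnorm, hu_def, hv_def]
    have hd1 : d 1 = c * μ2 t * (1 + (u t^2 + v t^2)) *
        (μ1 t*(-(1/2)*u t - (1/10)*v t) + (1-μ1 t)*(-2*u t))
        + c * (1 - μ2 t) * (-2*u t) := by
      simp only [hd_def, PiLp.add_apply, PiLp.smul_apply, smul_eq_mul, amat_apply1, a0_apply1,
        hnorm, hu_def, hv_def]
    obtain ⟨hl0, hl1⟩ := hμ1 t ht
    obtain ⟨hm0, hm1⟩ := hμ2 t ht
    rw [hd0, hd1]
    simp only [hV_def]
    rw [expand_lemma]
    exact key_ineq c (μ2 t) (μ1 t) (u t) (v t) hc hl0 hl1 hm0 hm1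
  have hxc : ContinuousOn x (Ici 0) := fun t ht => (hx t ht).continuousWithinAt
  have huc : ContinuousOn u (Ici 0) :=
    (EuclideanSpace.proj (0 : Fin 2)).continuous.comp_continuousOn hxc
  have hvc : ContinuousOn v (Ici 0) :=
    (EuclideanSpace.proj (1 : Fin 2)).continuous.comp_continuousOn hxc
  have hVcont : ContinuousOn V (Ici 0) :=
    (((huc.mul huc).const_smul (25:ℝ)).sub ((huc.mul hvc).const_smul (2:ℝ))).add
      ((hvc.mul hvc).const_smul ((63:ℝ)/10))
  set Wf : ℝ → ℝ := fun s => V s * Real.exp ((c/52)*s) with hWf_def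
  have hWcont : ContinuousOn Wf (Ici 0) :=
    hVcont.mul ((Real.continuous_exp.comp (continuous_const.mul continuous_id)).continuousOn)
  have hWanti : AntitoneOn Wf (Ici 0) := by
    apply antitoneOn_of_deriv_nonpos (convex_Ici 0) hWcont
    · intro t ht
      rw [interior_Ici] at ht
      obtain ⟨D, hD, _⟩ := hder t ht.le
      have hVt : HasDerivAt V D t := hD.hasDerivAt (Ici_mem_nhds ht)
      have he : HasDerivAt (fun s => Real.exp ((c/52)*s)) (Real.exp ((c/52)*t) * (c/52)) t := by
        simpa [Function.comp_def] using (Real.hasDerivAt_exp ((c/52)*t)).comp t ((hasDerivAt_id t).const_mul (c/52))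
      exact (hVt.mul he).differentiableAt.differentiableWithinAt
    · intro t ht
      rw [interior_Ici] at ht
      obtain ⟨D, hD, hle⟩ := hder t ht.le
      have hVt : HasDerivAt V D t := hD.hasDerivAt (Ici_mem_nhds ht)
      have he : HasDerivAt (fun s => Real.exp ((c/52)*s)) (Real.exp ((c/52)*t) * (c/52)) t := by
        simpa [Function.comp_def] using (Real.hasDerivAt_exp ((c/52)*t)).comp t ((hasDerivAt_id t).const_mul (c/52))
      have hWt : HasDerivAt Wf (D * Real.exp ((c/52)*t) + V t * (Real.exp ((c/52)*t) * (c/52)))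
          t := hVt.mul he
      rw [hWt.deriv]
      nlinarith [mul_le_mul_of_nonneg_right hle (Real.exp_pos ((c/52)*t)).le]
  intro t ht
  have hWle : V t * Real.exp ((c/52)*t) ≤ V 0 := by
    have h := hWanti (self_mem_Ici) (show t ∈ Ici (0:ℝ) from ht) ht
    simpa [hWf_def] using h
  have hepos := Real.exp_pos ((c/52)*t)
  have hVt_le : V t ≤ V 0 * Real.exp (-((c/52)*t)) := by
    rw [Real.exp_neg, mul_comm (V 0), ← div_eq_inv_mul]
    exact (le_div_iff₀ hepos).2 hWle
  have hV0le : V 0 ≤ 26 * ‖x 0‖^2 := by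
    rw [norm_sq_E2 (x 0)]
    simp only [hV_def]
    nlinarith [sq_nonneg (x 0 0 + x 0 1)]
  have hlow : (53/10) * ‖x t‖^2 ≤ V t := by
    rw [norm_sq_E2 (x t)]
    simp only [hV_def]
    nlinarith [sq_nonneg (x t 0 - x t 1)]
  have h26 : V 0 * Real.exp (-((c/52)*t)) ≤ 26 * ‖x 0‖^2 * Real.exp (-((c/52)*t)) :=
    mul_le_mul_of_nonneg_right hV0le (Real.exp_pos _).le
  have hsq : ‖x t‖^2 ≤ (3 * ‖x 0‖ * Real.exp (-(c * (1/104)) * t))^2 := by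
    have hrhs : (3 * ‖x 0‖ * Real.exp (-(c * (1/104)) * t))^2
        = 9 * ‖x 0‖^2 * Real.exp (-((c/52)*t)) := by
      rw [mul_pow, mul_pow, sq (Real.exp _), ← Real.exp_add]
      ring_nf
    rw [hrhs]
    nlinarith [hVt_le, hlow, h26,
      mul_nonneg (sq_nonneg ‖x 0‖) (Real.exp_pos (-((c/52)*t))).le]
  calc ‖x t‖ = Real.sqrt (‖x t‖^2) := by rw [Real.sqrt_sq (norm_nonneg _)]
    _ ≤ Real.sqrt ((3 * ‖x 0‖ * Real.exp (-(c * (1/104)) * t))^2) := Real.sqrt_le_sqrt hsq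
    _ = 3 * ‖x 0‖ * Real.exp (-(c * (1/104)) * t) := Real.sqrt_sq (by positivity)
end
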